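/- In the max-cut reduction game, the mixed strategy profile where each player i_v independently produces output 1 along α_v with probability 1/2 and along β_v with probability 1/2 is a mixed-strategy Nash equilibrium: given that all other players follow this strategy, every pure strategy of player i_v that selects α_v or β_v yields the same expected utility, and any strategy producing output along activities of a different vertex yields strictly lower expected utility. -/

import Mathlib

open Finset

noncomputable section MaxCutMixed

variable {V : Type*} [Fintype V] [DecidableEq V]

/-- total edge weight -/
def totalW (E : Finset (Sym2 V)) (w : Sym2 V → ℝ) : ℝ := ∑ e ∈ E, w e

/-- winners of the vertex contest of `u` -/
def vWinners (s : V → V × Bool) (u : V) : Finset V :=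
  univ.filter (fun i => (s i).1 = u)

/-- winners of the edge contest of edge `e` on side `side` -/
def eWinners (s : V → V × Bool) (e : Sym2 V) (side : Bool) : Finset V :=
  univ.filter (fun i => (s i).1 ∈ e ∧ (s i).2 = side)

/-- utility of player `i` in the max-cut reduction game -/
def mcUtil (E : Finset (Sym2 V)) (w : Sym2 V → ℝ) (s : V → V × Bool) (i : V) : ℝ :=
  (4 * totalW E w + 2) / ((vWinners s (s i).1).card : ℝ)
  + ∑ e ∈ E, ∑ side : Bool,
      if i ∈ eWinners s e side then w e / ((eWinners s e side).card : ℝ) else 0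

/-- the pure profile in which each player `j` plays its own vertex with side `t j` -/
def baseProf (t : V → Bool) : V → V × Bool := fun j => (j, t j)

/-- expected utility of player `i` under the uniform mixed profile where each player
independently plays its own vertex with a uniformly random side -/
def expUtil (E : Finset (Sym2 V)) (w : Sym2 V → ℝ) (i : V) : ℝ :=
  (1 / 2) ^ (Fintype.card V) * ∑ t : V → Bool, mcUtil E w (baseProf t) i

/-- expected utility of player `i` when unilaterally deviating to the pure strategy `a`
while all other players follow the uniform mixed profile -/
def expDev (E : Finset (Sym2 V)) (w : Sym2 V → ℝ) (i : V) (a : V × Bool) : ℝ :=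
  (1 / 2) ^ (Fintype.card V) *
    ∑ t : V → Bool, mcUtil E w (Function.update (baseProf t) i a) i

lemma vWinners_base (t : V → Bool) (u : V) : vWinners (baseProf t) u = {u} := by
  ext j; rw [vWinners, Finset.mem_filter]; simp [baseProf]

lemma vWinners_dev (t : V → Bool) (i v : V) (b : Bool) :
    vWinners (Function.update (baseProf t) i (v, b)) v = {v, i} := by
  ext j
  simp only [vWinners, mem_filter, mem_univ, true_and, mem_insert, mem_singleton]
  by_cases hj : j = i
  · subst hj; simp [Function.update_self]
  · simp [Function.update_of_ne hj, baseProf, hj]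

/-- the edge-contest part of the utility is nonnegative -/
lemma edgePart_nonneg (E : Finset (Sym2 V)) (w : Sym2 V → ℝ) (hw : ∀ e ∈ E, 0 < w e)
    (s : V → V × Bool) (i : V) :
    0 ≤ ∑ e ∈ E, ∑ side : Bool,
      if i ∈ eWinners s e side then w e / ((eWinners s e side).card : ℝ) else 0 := by
  refine Finset.sum_nonneg fun e he => Finset.sum_nonneg fun side _ => ?_
  split
  · exact div_nonneg (hw e he).le (by positivity)
  · exact le_refl 0

/-- the edge-contest part of the utility is at most the total edge weight -/
lemma edgePart_le (E : Finset (Sym2 V)) (w : Sym2 V → ℝ) (hw : ∀ e ∈ E, 0 < w e)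
    (s : V → V × Bool) (i : V) :
    (∑ e ∈ E, ∑ side : Bool,
      if i ∈ eWinners s e side then w e / ((eWinners s e side).card : ℝ) else 0)
    ≤ totalW E w := by
  refine Finset.sum_le_sum fun e he => ?_
  have hterm : ∀ side : Bool,
      (if i ∈ eWinners s e side then w e / ((eWinners s e side).card : ℝ) else 0) ≤ w e := by
    intro side
    split
    next h =>
      refine div_le_self (hw e he).le ?_
      exact_mod_cast Finset.one_le_card.mpr ⟨i, h⟩
    next => exact (hw e he).le
  have hside : ∀ side : Bool, i ∈ eWinners s e side → (s i).2 = side := by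
    intro side h
    exact ((Finset.mem_filter.mp h).2).2
  rw [Fintype.sum_bool]
  by_cases h1 : i ∈ eWinners s e true
  · have h2 : i ∉ eWinners s e false := by
      intro h2
      have := hside true h1
      have := hside false h2
      simp_all
    rw [if_neg h2]
    simpa using hterm true
  · rw [if_neg h1]
    simpa using hterm false

lemma mcUtil_base_ge (E : Finset (Sym2 V)) (w : Sym2 V → ℝ) (hw : ∀ e ∈ E, 0 < w e)
    (t : V → Bool) (i : V) :
    4 * totalW E w + 2 ≤ mcUtil E w (baseProf t) i := by
  have h1 : (baseProf t i).1 = i := rfl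
  have h2 := edgePart_nonneg E w hw (baseProf t) i
  unfold mcUtil
  rw [h1, vWinners_base]
  simp only [Finset.card_singleton, Nat.cast_one, div_one]
  linarith

lemma mcUtil_dev_le (E : Finset (Sym2 V)) (w : Sym2 V → ℝ) (hw : ∀ e ∈ E, 0 < w e)
    (t : V → Bool) (i v : V) (b : Bool) (h : v ≠ i) :
    mcUtil E w (Function.update (baseProf t) i (v, b)) i
      ≤ (4 * totalW E w + 2) / 2 + totalW E w := by
  have h1 : (Function.update (baseProf t) i (v, b) i).1 = v := by
    rw [Function.update_self]
  have h2 := edgePart_le E w hw (Function.update (baseProf t) i (v, b)) i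
  unfold mcUtil
  rw [h1, vWinners_dev]
  have hcard : ({v, i} : Finset V).card = 2 := Finset.card_pair h
  rw [hcard]
  push_cast
  linarith

lemma totalW_nonneg (E : Finset (Sym2 V)) (w : Sym2 V → ℝ) (hw : ∀ e ∈ E, 0 < w e) :
    0 ≤ totalW E w :=
  Finset.sum_nonneg fun e he => (hw e he).le

/-- flipping all sides of the base profile does not change utilities -/
lemma mcUtil_base_flip (E : Finset (Sym2 V)) (w : Sym2 V → ℝ) (t : V → Bool) (i : V) :
    mcUtil E w (baseProf fun j => !(t j)) i = mcUtil E w (baseProf t) i := by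
  have hW : ∀ e side, eWinners (baseProf fun j => !(t j)) e side
      = eWinners (baseProf t) e (!side) := by
    intro e side
    ext j
    rw [eWinners, eWinners, mem_filter, mem_filter]
    simp only [eWinners, mem_filter, mem_univ, true_and, baseProf]
    constructor
    · rintro ⟨hj, hs⟩; exact ⟨hj, by rw [← hs, Bool.not_not]⟩
    · rintro ⟨hj, hs⟩; exact ⟨hj, by rw [hs, Bool.not_not]⟩
  have h1 : ((baseProf fun j => !(t j)) i).1 = i := rfl
  have h2 : (baseProf t i).1 = i := rfl
  unfold mcUtil
  rw [h1, h2, vWinners_base, vWinners_base]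
  congr 1
  refine Finset.sum_congr rfl fun e _ => ?_
  rw [Fintype.sum_bool, Fintype.sum_bool, hW, hW]
  simp only [Bool.not_true, Bool.not_false]
  exact add_comm _ _

/-- summing a flip-invariant function after freezing one coordinate gives the full sum -/
lemma sum_update_side (f : (V → Bool) → ℝ) (i : V) (side : Bool)
    (hflip : ∀ t, f (fun j => !(t j)) = f t) :
    ∑ t : V → Bool, f (Function.update t i side) = ∑ t : V → Bool, f t := by
  have key : ∀ b : Bool, ∑ t ∈ univ.filter (fun t : V → Bool => t i = b), f t
      = ∑ t ∈ univ.filter (fun t : V → Bool => t i = !b), f t := by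
    intro b
    refine Finset.sum_nbij' (fun t => fun j => !(t j)) (fun t => fun j => !(t j))
      ?_ ?_ ?_ ?_ ?_
    · intro t ht; simp only [mem_filter, mem_univ, true_and] at ht ⊢; rw [ht]
    · intro t ht; simp only [mem_filter, mem_univ, true_and] at ht ⊢
      rw [ht, Bool.not_not]
    · intro t _; funext j; simp
    · intro t _; funext j; simp
    · intro t _; exact (hflip t).symm
  have split : ∀ g : (V → Bool) → ℝ, ∑ t : V → Bool, g t
      = ∑ t ∈ univ.filter (fun t : V → Bool => t i = side), g t
      + ∑ t ∈ univ.filter (fun t : V → Bool => ¬ (t i = side)), g t :=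
    fun g => (Finset.sum_filter_add_sum_filter_not univ _ g).symm
  rw [split (fun t => f (Function.update t i side)), split f]
  have hA1 : ∑ t ∈ univ.filter (fun t : V → Bool => t i = side),
      f (Function.update t i side)
      = ∑ t ∈ univ.filter (fun t : V → Bool => t i = side), f t := by
    refine Finset.sum_congr rfl fun t ht => ?_
    simp only [mem_filter, mem_univ, true_and] at ht
    rw [← ht, Function.update_eq_self]
  have hA2 : ∑ t ∈ univ.filter (fun t : V → Bool => ¬ (t i = side)),
      f (Function.update t i side)
      = ∑ t ∈ univ.filter (fun t : V → Bool => t i = side), f t := by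
    refine Finset.sum_nbij' (fun t => Function.update t i side)
      (fun t => Function.update t i (!side)) ?_ ?_ ?_ ?_ ?_
    · intro t _; simp
    · intro t _; simp
    · intro t ht
      simp only [mem_filter, mem_univ, true_and] at ht
      have hts : t i = !side := Bool.eq_not_iff.mpr ht
      show Function.update (Function.update t i side) i (!side) = t
      rw [Function.update_idem, ← hts, Function.update_eq_self]
    · intro t ht
      simp only [mem_filter, mem_univ, true_and] at ht
      show Function.update (Function.update t i (!side)) i side = t
      rw [Function.update_idem, ← ht, Function.update_eq_self]
    · intro t _; rfl
  have hA3 : ∑ t ∈ univ.filter (fun t : V → Bool => ¬ (t i = side)), f t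
      = ∑ t ∈ univ.filter (fun t : V → Bool => t i = side), f t := by
    have hfe : univ.filter (fun t : V → Bool => ¬ (t i = side))
        = univ.filter (fun t : V → Bool => t i = !side) := by
      ext t
      simp only [mem_filter, mem_univ, true_and]
      exact (Bool.eq_not_iff (a := t i) (b := side)).symm
    rw [hfe, ← key side]
  rw [hA1, hA2, hA3]

/-- The uniform-side mixed profile is a mixed Nash equilibrium of the max-cut reduction
game: any pure strategy on the player's own vertex gives the same expected utility, and
any pure strategy on a different vertex gives strictly lower expected utility. -/
theorem uniform_mixed_profile_is_mne
    (E : Finset (Sym2 V)) (w : Sym2 V → ℝ)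
    (hE : ∀ e ∈ E, ¬ e.IsDiag) (hw : ∀ e ∈ E, 0 < w e) :
    (∀ i : V, ∀ side : Bool, expDev E w i (i, side) = expUtil E w i) ∧
    (∀ i : V, ∀ a : V × Bool, a.1 ≠ i → expDev E w i a < expUtil E w i) := by
  have hW := totalW_nonneg E w hw
  have hconst : ∀ c : ℝ,
      (1 / 2 : ℝ) ^ (Fintype.card V) * ∑ _t : V → Bool, c = c := by
    intro c
    rw [Finset.sum_const, card_univ, Fintype.card_fun, Fintype.card_bool, nsmul_eq_mul]
    push_cast
    rw [← mul_assoc, ← mul_pow]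
    norm_num
  have hpow : (0 : ℝ) ≤ (1 / 2 : ℝ) ^ (Fintype.card V) := by positivity
  constructor
  · intro i side
    have hupd : ∀ t : V → Bool,
        Function.update (baseProf t) i (i, side) = baseProf (Function.update t i side) := by
      intro t
      funext j
      by_cases hj : j = i
      · subst hj; simp [baseProf]
      · simp [baseProf, Function.update_of_ne hj]
    unfold expDev expUtil
    congr 1
    calc ∑ t : V → Bool, mcUtil E w (Function.update (baseProf t) i (i, side)) i
        = ∑ t : V → Bool, mcUtil E w (baseProf (Function.update t i side)) i := by
          refine Finset.sum_congr rfl fun t _ => ?_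
          rw [hupd t]
      _ = ∑ t : V → Bool, mcUtil E w (baseProf t) i :=
          sum_update_side (fun t => mcUtil E w (baseProf t) i) i side
            (fun t => mcUtil_base_flip E w t i)
  · rintro i ⟨v, b⟩ ha
    simp only at ha
    have hdev : expDev E w i (v, b) ≤ (4 * totalW E w + 2) / 2 + totalW E w := by
      unfold expDev
      calc (1 / 2 : ℝ) ^ (Fintype.card V) *
            ∑ t : V → Bool, mcUtil E w (Function.update (baseProf t) i (v, b)) i
          ≤ (1 / 2 : ℝ) ^ (Fintype.card V) *
            ∑ _t : V → Bool, ((4 * totalW E w + 2) / 2 + totalW E w) := by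
            refine mul_le_mul_of_nonneg_left ?_ hpow
            exact Finset.sum_le_sum fun t _ => mcUtil_dev_le E w hw t i v b ha
        _ = (4 * totalW E w + 2) / 2 + totalW E w := hconst _
    have hutil : 4 * totalW E w + 2 ≤ expUtil E w i := by
      unfold expUtil
      calc (4 * totalW E w + 2 : ℝ)
          = (1 / 2 : ℝ) ^ (Fintype.card V) *
            ∑ _t : V → Bool, (4 * totalW E w + 2) := (hconst _).symm
        _ ≤ (1 / 2 : ℝ) ^ (Fintype.card V) * ∑ t : V → Bool, mcUtil E w (baseProf t) i := by
            refine mul_le_mul_of_nonneg_left ?_ hpow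
            exact Finset.sum_le_sum fun t _ => mcUtil_base_ge E w hw t i
    linarith

end MaxCutMixed
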